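/- Under the setting of the penalized least-squares estimator with λ ≥ (4/D)·N⋆(XᵀU), the estimator β̂ satisfies (1/D)‖X(β − β̂)‖₂² ≤ (λ/2)·min{3N(β − β̂), 3N(β) − N(β̂)}. -/

import Mathlib

def NAux (p : ℕ) : Type := Fin p → ℝ

noncomputable instance (p : ℕ) : AddCommGroup (NAux p) := inferInstanceAs (AddCommGroup (Fin p → ℝ))
noncomputable instance (p : ℕ) : Module ℝ (NAux p) := inferInstanceAs (Module ℝ (Fin p → ℝ))
noncomputable instance (p : ℕ) : FiniteDimensional ℝ (NAux p) :=
  inferInstanceAs (FiniteDimensional ℝ (Fin p → ℝ))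

theorem dual_bound {p : ℕ} (N : (Fin p → ℝ) → ℝ)
    (hN0 : ∀ w, 0 ≤ N w) (hNeq : ∀ w, N w = 0 ↔ w = 0)
    (hNsmul : ∀ (c : ℝ) (w), N (c • w) = |c| * N w)
    (hNadd : ∀ w w', N (w + w') ≤ N w + N w')
    (v : Fin p → ℝ) :
    ∃ C : ℝ, ∀ w : Fin p → ℝ, (∑ j, v j * w j) ≤ C * N w := by
  letI : NormedAddCommGroup (NAux p) := AddGroupNorm.toNormedAddCommGroup
    { toFun := fun w => N w
      map_zero' := (hNeq 0).2 rfl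
      add_le' := hNadd
      neg' := fun w => by
        have h : N (-(show Fin p → ℝ from w)) = N w := by
          rw [← neg_one_smul ℝ (show Fin p → ℝ from w), hNsmul]; simp
        exact h
      eq_zero_of_map_eq_zero' := fun w h => (hNeq w).1 h }
  letI : NormedSpace ℝ (NAux p) :=
    { (inferInstance : Module ℝ (NAux p)) with
      norm_smul_le := fun c w => le_of_eq (hNsmul c w) }
  let f : NAux p →ₗ[ℝ] ℝ :=
    { toFun := fun w => ∑ j, v j * w j
      map_add' := fun a b => by
        show (∑ j, v j * (a j + b j)) = (∑ j, v j * a j) + ∑ j, v j * b j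
        simp [mul_add, Finset.sum_add_distrib]
      map_smul' := fun c a => by
        show (∑ j, v j * (c * a j)) = c * ∑ j, v j * a j
        rw [Finset.mul_sum]
        exact Finset.sum_congr rfl fun j _ => by ring }
  let g : NAux p →L[ℝ] ℝ := LinearMap.toContinuousLinearMap f
  refine ⟨‖g‖, fun w => ?_⟩
  have h := g.le_opNorm (w : NAux p)
  have h2 : |∑ j, v j * w j| ≤ ‖g‖ * N w := h
  exact le_trans (le_abs_self _) h2

/-- Refined basic inequality for the `N`-penalized least-squares estimator with
`λ ≥ (4/D)·N⋆(XᵀU)`. -/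
theorem refined_basic_inequality {D p : ℕ} (hD : 0 < D) (lam : ℝ) (hlam0 : 0 < lam)
    (X : Matrix (Fin D) (Fin p) ℝ) (y : Fin D → ℝ)
    (N : (Fin p → ℝ) → ℝ)
    (hN0 : ∀ w, 0 ≤ N w) (hNeq : ∀ w, N w = 0 ↔ w = 0)
    (hNsmul : ∀ (c : ℝ) (w), N (c • w) = |c| * N w)
    (hNadd : ∀ w w', N (w + w') ≤ N w + N w')
    (β : Fin p → ℝ)
    (hlam : lam ≥ (4 / (D : ℝ)) * sSup {r : ℝ | ∃ w : Fin p → ℝ, N w ≤ 1 ∧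
      r = ∑ j, (X.transpose.mulVec (y - X.mulVec β)) j * w j})
    (βhat : Fin p → ℝ)
    (hmin : ∀ a : Fin p → ℝ,
      (1 / (D : ℝ)) * (∑ t, (y t - X.mulVec βhat t) ^ 2) + lam * N βhat ≤
        (1 / (D : ℝ)) * (∑ t, (y t - X.mulVec a t) ^ 2) + lam * N a) :
    (1 / (D : ℝ)) * (∑ t, (X.mulVec (β - βhat) t) ^ 2) ≤
      (lam / 2) * min (3 * N (β - βhat)) (3 * N β - N βhat) := by
  have hD' : (0:ℝ) < D := by exact_mod_cast hD
  set v : Fin p → ℝ := X.transpose.mulVec (y - X.mulVec β) with hv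
  set S : ℝ := sSup {r : ℝ | ∃ w : Fin p → ℝ, N w ≤ 1 ∧ r = ∑ j, v j * w j} with hS
  obtain ⟨C, hC⟩ := dual_bound N hN0 hNeq hNsmul hNadd v
  have hbdd : BddAbove {r : ℝ | ∃ w : Fin p → ℝ, N w ≤ 1 ∧ r = ∑ j, v j * w j} := by
    refine ⟨|C|, ?_⟩
    rintro r ⟨w, hw, rfl⟩
    have h1 := hC w
    have h2 : C * N w ≤ |C| := by nlinarith [hN0 w, le_abs_self C, abs_nonneg C]
    linarith
  have hmem : ∀ w : Fin p → ℝ, N w ≤ 1 → (∑ j, v j * w j) ≤ S :=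
    fun w hw => le_csSup hbdd ⟨w, hw, rfl⟩
  have hS0 : 0 ≤ S := by
    have := hmem 0 (le_of_eq ((hNeq 0).2 rfl) |>.trans zero_le_one)
    simpa using this
  have hNneg : ∀ w, N (-w) = N w := fun w => by simpa using hNsmul (-1) w
  -- key dual bound
  have key : ∀ w : Fin p → ℝ, |∑ j, v j * w j| ≤ S * N w := by
    intro w
    rcases eq_or_ne (N w) 0 with h0 | h0
    · have hw0 : w = 0 := (hNeq w).1 h0
      subst hw0
      simp [h0]
    · have hpos : 0 < N w := lt_of_le_of_ne (hN0 w) (Ne.symm h0)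
      have hc : 0 < (N w)⁻¹ := inv_pos.2 hpos
      have hu1 : N ((N w)⁻¹ • w) ≤ 1 := by
        rw [hNsmul, abs_of_pos hc]
        rw [inv_mul_cancel₀ h0]
      have hu2 : N ((N w)⁻¹ • (-w)) ≤ 1 := by
        rw [hNsmul, abs_of_pos hc, hNneg]
        rw [inv_mul_cancel₀ h0]
      have e1 : (∑ j, v j * ((N w)⁻¹ • w) j) = (N w)⁻¹ * ∑ j, v j * w j := by
        rw [Finset.mul_sum]
        exact Finset.sum_congr rfl fun j _ => by simp [Pi.smul_apply, smul_eq_mul]; ring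
      have e2 : (∑ j, v j * ((N w)⁻¹ • (-w)) j) = -((N w)⁻¹ * ∑ j, v j * w j) := by
        rw [Finset.mul_sum, ← Finset.sum_neg_distrib]
        exact Finset.sum_congr rfl fun j _ => by simp [Pi.smul_apply, smul_eq_mul]; ring
      have b1 := hmem _ hu1
      have b2 := hmem _ hu2
      rw [e1] at b1
      rw [e2] at b2
      have m1 := mul_le_mul_of_nonneg_left b1 hpos.le
      rw [← mul_assoc, mul_inv_cancel₀ h0, one_mul] at m1
      have m2 := mul_le_mul_of_nonneg_left b2 hpos.le
      rw [mul_neg, ← mul_assoc, mul_inv_cancel₀ h0, one_mul] at m2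
      rw [abs_le]
      constructor
      · linarith
      · linarith
  -- λ bound on S
  have h4S : 4 * S ≤ lam * D := by
    rw [ge_iff_le, div_mul_eq_mul_div, div_le_iff₀ hD'] at hlam
    linarith
  -- cross term identity
  have hUW : (∑ t, (y t - X.mulVec β t) * X.mulVec (β - βhat) t)
      = ∑ j, v j * (β - βhat) j := by
    rw [hv]
    simp only [Matrix.mulVec, dotProduct, Matrix.transpose_apply, Pi.sub_apply,
      Finset.mul_sum, Finset.sum_mul]
    rw [Finset.sum_comm]
    exact Finset.sum_congr rfl fun j _ => Finset.sum_congr rfl fun t _ => by ring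
  have hW : ∀ t, X.mulVec (β - βhat) t = X.mulVec β t - X.mulVec βhat t := by
    intro t; rw [Matrix.mulVec_sub]; rfl
  have hsum : (∑ t, (y t - X.mulVec βhat t)^2)
      = (∑ t, (y t - X.mulVec β t)^2) + 2 * (∑ j, v j * (β - βhat) j)
        + ∑ t, (X.mulVec (β - βhat) t)^2 := by
    rw [← hUW, Finset.mul_sum, ← Finset.sum_add_distrib, ← Finset.sum_add_distrib]
    exact Finset.sum_congr rfl fun t _ => by rw [hW t]; ring
  set T : ℝ := ∑ j, v j * (β - βhat) j with hT
  set B : ℝ := ∑ t, (X.mulVec (β - βhat) t)^2 with hB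
  have hb := hmin β
  rw [hsum] at hb
  -- clear denominators in hb
  have hb2 : B + 2 * T + D * (lam * N βhat) ≤ D * (lam * N β) := by
    have h := mul_le_mul_of_nonneg_left hb hD'.le
    have hDne : (D:ℝ) ≠ 0 := ne_of_gt hD'
    field_simp at h
    nlinarith [h]
  have hkey := key (β - βhat)
  rw [← hT] at hkey
  have habs := abs_le.1 hkey
  have hnd0 := hN0 (β - βhat)
  have t1 : N (β - βhat) ≤ N β + N βhat := by
    have := hNadd β (-βhat)
    rw [hNneg] at this
    simpa [sub_eq_add_neg] using this
  have t2 : N β ≤ N βhat + N (β - βhat) := by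
    have := hNadd βhat (β - βhat)
    simpa using this
  rw [mul_min_of_nonneg _ _ (by positivity : (0:ℝ) ≤ lam / 2)]
  apply le_min
  · -- (1/D) B ≤ (lam/2) * (3 * N(β-βhat))
    rw [one_div, inv_mul_le_iff₀ hD']
    have p1 : 4 * S * N (β - βhat) ≤ lam * D * N (β - βhat) :=
      mul_le_mul_of_nonneg_right h4S hnd0
    have p2 : lam * D * (N β - N βhat) ≤ lam * D * N (β - βhat) := by
      have hld : 0 ≤ lam * D := by positivity
      have : N β - N βhat ≤ N (β - βhat) := by linarith
      nlinarith
    nlinarith [mul_nonneg hS0 hnd0]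
  · rw [one_div, inv_mul_le_iff₀ hD']
    have p1 : 4 * S * N (β - βhat) ≤ lam * D * N (β - βhat) :=
      mul_le_mul_of_nonneg_right h4S hnd0
    have p3 : lam * D * N (β - βhat) ≤ lam * D * (N β + N βhat) := by
      have hld : 0 ≤ lam * D := by positivity
      nlinarith
    nlinarith [mul_nonneg hS0 hnd0]
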